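/- Suppose P is M-bounded with support containing more than k points and c* ∈ 𝓜 is an optimal codebook. Then for all i ≠ j and all 0 ≤ t < 1/2, writing r_{ij} = ‖c*_i − c*_j‖ and p_ℓ = P(V_ℓ(c*)): ∫_0^{t·r_{ij}} p_{ij}(c*,s) ds ≤ 2 t² r_{ij} · min( p_i/(1−2t), p_j/(1+2t) ), and also ∫_0^{t·r_{ij}} p_{ij}(c*,s) ds ≤ t² r_{ij} (p_i + p_j)/2. -/

import Mathlib

open MeasureTheory Metric
open scoped Classical ENNReal NNReal BigOperators RealInnerProductSpace

noncomputable section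

namespace Kmeans


variable {H : Type*} [NormedAddCommGroup H] [InnerProductSpace ℝ H]
  [MeasurableSpace H]

/-- Distortion of a codebook `c` with respect to the measure `P`. -/
def distortion (P : Measure H) (k : ℕ) (c : Fin k → H) : ℝ :=
  ∫ x, (⨅ j : Fin k, ‖x - c j‖ ^ 2) ∂P

/-- The `j`-th closed Voronoi cell of the codebook `c`. -/
def voronoi (k : ℕ) (c : Fin k → H) (j : Fin k) : Set H :=
  {x : H | ∀ i : Fin k, ‖x - c j‖ ≤ ‖x - c i‖}

/-- The set `𝓜` of optimal codebooks, i.e. minimizers of the distortion. -/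
def optimal (P : Measure H) (k : ℕ) : Set (Fin k → H) :=
  {c | ∀ c' : Fin k → H, distortion P k c ≤ distortion P k c'}

/-- `B`: minimal separation between two codepoints of an optimal codebook. -/
def Bsep (P : Measure H) (k : ℕ) : ℝ :=
  sInf {r : ℝ | ∃ c ∈ optimal P k, ∃ i j : Fin k, i ≠ j ∧ r = ‖c i - c j‖}

/-- `p_min`: minimal mass of a Voronoi cell of an optimal codebook. -/
def pmin (P : Measure H) (k : ℕ) : ℝ :=
  sInf {r : ℝ | ∃ c ∈ optimal P k, ∃ j : Fin k, r = (P (voronoi k c j)).toReal}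

/-- `N(c)`: the skeleton of the Voronoi diagram of `c`. -/
def Ncrit (k : ℕ) (c : Fin k → H) : Set H :=
  ⋃ (i : Fin k) (j : Fin k) (_ : i ≠ j), {x : H | ‖x - c i‖ = ‖x - c j‖}

/-- `p(t)`: maximal mass of the `t`-neighborhood of the skeleton of an optimal codebook. -/
def pweight (P : Measure H) (k : ℕ) (t : ℝ) : ℝ :=
  sSup {r : ℝ | ∃ c ∈ optimal P k, r = (P {x : H | infDist x (Ncrit k c) ≤ t}).toReal}

/-- `P` is `M`-bounded: its support is contained in the closed ball of radius `M`. -/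
def MBounded (P : Measure H) (M : ℝ) : Prop :=
  P (closedBall (0 : H) M) = 1

/-- The support of `P` contains more than `k` points. -/
def SupportMoreThan (P : Measure H) (k : ℕ) : Prop :=
  ∃ S : Finset H, k < S.card ∧ ∀ x ∈ S, ∀ ε : ℝ, 0 < ε → 0 < P (ball x ε)

/-- The margin condition with radius `r₀`. -/
def MarginCondition (P : Measure H) (k : ℕ) (M r₀ : ℝ) : Prop :=
  0 < r₀ ∧ MBounded P M ∧
    ∀ t : ℝ, 0 ≤ t → t ≤ r₀ →
      pweight P k t ≤ Bsep P k * pmin P k * t / (128 * M ^ 2)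

/-- The cells `W_j(c)` forming a partition subordinated to the Voronoi diagram. -/
def Wcell (k : ℕ) (c : Fin k → H) (j : Fin k) : Set H :=
  voronoi k c j \ ⋃ (i : Fin k) (_ : i < j), voronoi k c i

/-- `𝓜‾`: codebooks satisfying the centroid condition (stationary points). -/
def stationary (P : Measure H) (k : ℕ) : Set (Fin k → H) :=
  {c | ∀ i : Fin k, (P (Wcell k c i)).toReal • c i = ∫ x in Wcell k c i, x ∂P}

/-- `P` is `ε`-separated. -/
def Separated (P : Measure H) (k : ℕ) (ε : ℝ) : Prop :=
  ∀ c ∈ stationary P k \ optimal P k, ∀ cs ∈ optimal P k,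
    ε ≤ distortion P k c - distortion P k cs

/-- Euclidean distance between codebooks. -/
def cbDist (k : ℕ) (c c' : Fin k → H) : ℝ :=
  Real.sqrt (∑ j : Fin k, ‖c j - c' j‖ ^ 2)

/-- The empirical measure of a sample. -/
def empMeasure {n : ℕ} (X : Fin n → H) : Measure H :=
  ((n : ℝ≥0∞))⁻¹ • ∑ i : Fin n, Measure.dirac (X i)

/-- Number of optimal codebooks up to relabeling of codepoints. -/
def MbarCard (P : Measure H) (k : ℕ) : ℕ :=
  Set.ncard {s : Set (Fin k → H) |
    ∃ c ∈ optimal P k, s = {c' | ∃ π : Equiv.Perm (Fin k), c' = c ∘ π}}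

/-- The mass `p_{ij}(c,t)` of a slab along the segment `[c_i, c_j]` intersected with `V_j(c)`. -/
def pij (P : Measure H) (k : ℕ) (c : Fin k → H) (i j : Fin k) (t : ℝ) : ℝ :=
  (P ({x : H |
      0 ≤ ⟪x - (2⁻¹ : ℝ) • (c i + c j), ‖c i - c j‖⁻¹ • (c j - c i)⟫ ∧
      ⟪x - (2⁻¹ : ℝ) • (c i + c j), ‖c i - c j‖⁻¹ • (c j - c i)⟫ ≤ t} ∩
    voronoi k c j)).toReal

/-- The classification risk between two (ordered) partitions. -/
def classifRisk (P : Measure H) (k : ℕ) (C C' : Fin k → Set H) : ℝ :=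
  sInf {r : ℝ | ∃ π : Equiv.Perm (Fin k),
    r = (P (⋃ j : Fin k, C (π j) ∩ (C' j)ᶜ)).toReal}

/-- A sample is `f`-clusterable. -/
def Clusterable {n : ℕ} (X : Fin n → H) (k : ℕ) (f : ℝ) : Prop :=
  ∃ c ∈ optimal (empMeasure X) k, ∀ i j : Fin k, i ≠ j →
    f * Real.sqrt (distortion (empMeasure X) k c) *
      (1 / Real.sqrt ((Finset.univ.filter fun a => X a ∈ voronoi k c i).card) +
       1 / Real.sqrt ((Finset.univ.filter fun a => X a ∈ voronoi k c j).card))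
      ≤ ‖c i - c j‖

/-- Membership in the class `𝓓(B₋, r₀₋, p₋, ε₋)` of distributions. -/
def inClassD (P : Measure H) (k : ℕ) (M Bm rm pm em : ℝ) : Prop :=
  IsProbabilityMeasure P ∧ SupportMoreThan P k ∧
    (∃ r₀ : ℝ, rm ≤ r₀ ∧ MarginCondition P k M r₀) ∧
    Bm ≤ Bsep P k ∧ pm ≤ pmin P k ∧ Separated P k em

end Kmeans

open Kmeans

variable {H : Type*} [NormedAddCommGroup H] [InnerProductSpace ℝ H]
  [MeasurableSpace H] [BorelSpace H] [SecondCountableTopology H] [CompleteSpace H]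

set_option linter.unusedSectionVars false
set_option linter.unusedVariables false

section Aux

variable {H : Type*} [NormedAddCommGroup H] [InnerProductSpace ℝ H]
  [MeasurableSpace H] [BorelSpace H] [SecondCountableTopology H]

lemma kAux.le_of_forall_pos {a b : ℝ} (h : ∀ ε : ℝ, 0 < ε → a ≤ b + ε) : a ≤ b := by
  by_contra hc
  push_neg at hc
  have := h ((a - b) / 2) (by linarith)
  linarith

lemma kAux.isClosed_voronoi (k : ℕ) (c : Fin k → H) (l : Fin k) :
    IsClosed (voronoi k c l) := by
  have : voronoi k c l = ⋂ i : Fin k, {x : H | ‖x - c l‖ ≤ ‖x - c i‖} := by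
    ext x; simp [voronoi, Set.mem_iInter]
  rw [this]
  exact isClosed_iInter fun i =>
    isClosed_le (by fun_prop) (by fun_prop)

lemma kAux.measurableSet_voronoi (k : ℕ) (c : Fin k → H) (l : Fin k) :
    MeasurableSet (voronoi k c l) :=
  (kAux.isClosed_voronoi k c l).measurableSet

lemma kAux.ae_mem_ball {P : Measure H} [IsProbabilityMeasure P] {M : ℝ}
    (hbdd : MBounded P M) : ∀ᵐ x ∂P, x ∈ closedBall (0 : H) M := by
  rw [ae_iff]
  have : {x : H | ¬ x ∈ closedBall (0:H) M} = (closedBall (0:H) M)ᶜ := rfl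
  rw [this, measure_compl measurableSet_closedBall (measure_ne_top _ _), hbdd]
  simp

lemma kAux.integrable_of_ball_bound {P : Measure H} [IsProbabilityMeasure P] {M : ℝ}
    (hbdd : MBounded P M) {f : H → ℝ} (hf : AEStronglyMeasurable f P) {C : ℝ}
    (hC : ∀ x ∈ closedBall (0 : H) M, |f x| ≤ C) : Integrable f P := by
  refine (integrable_const C).mono' hf ?_
  filter_upwards [kAux.ae_mem_ball hbdd] with x hx
  simpa [Real.norm_eq_abs] using hC x hx

lemma kAux.integrable_finf {P : Measure H} [IsProbabilityMeasure P] {M : ℝ}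
    (hbdd : MBounded P M) {k : ℕ} [Nonempty (Fin k)] (c : Fin k → H) :
    Integrable (fun x => ⨅ l : Fin k, ‖x - c l‖ ^ 2) P := by
  obtain ⟨l₀⟩ := (inferInstance : Nonempty (Fin k))
  have hmeas : Measurable (fun x => ⨅ l : Fin k, ‖x - c l‖ ^ 2) :=
    Measurable.iInf fun l => (continuous_id.sub continuous_const).norm.pow 2 |>.measurable
  apply kAux.integrable_of_ball_bound hbdd (C := (M + ‖c l₀‖) ^ 2)
    hmeas.aestronglyMeasurable
  intro x hx
  have h0 : (0:ℝ) ≤ ⨅ l : Fin k, ‖x - c l‖ ^ 2 :=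
    le_ciInf fun l => by positivity
  have h1 : (⨅ l : Fin k, ‖x - c l‖ ^ 2) ≤ ‖x - c l₀‖ ^ 2 :=
    ciInf_le (Finite.bddBelow_range _) l₀
  have h2 : ‖x - c l₀‖ ≤ M + ‖c l₀‖ := by
    have hx' : ‖x‖ ≤ M := mem_closedBall_zero_iff.mp hx
    calc ‖x - c l₀‖ ≤ ‖x‖ + ‖c l₀‖ := norm_sub_le _ _
    _ ≤ M + ‖c l₀‖ := by linarith
  have h3 : ‖x - c l₀‖ ^ 2 ≤ (M + ‖c l₀‖) ^ 2 := by
    have : (0:ℝ) ≤ ‖x - c l₀‖ := norm_nonneg _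
    nlinarith
  rw [abs_of_nonneg h0]
  linarith

lemma kAux.opt_pert {P : Measure H} [IsProbabilityMeasure P] {M : ℝ}
    (hbdd : MBounded P M) {k : ℕ} [Nonempty (Fin k)] {cs : Fin k → H}
    (hcs : cs ∈ optimal P k) (c' : Fin k → H) {h : H → ℝ} (hint : Integrable h P)
    (hpt : ∀ x, (⨅ l : Fin k, ‖x - c' l‖ ^ 2) ≤ (⨅ l : Fin k, ‖x - cs l‖ ^ 2) + h x) :
    0 ≤ ∫ x, h x ∂P := by
  have h1 : Integrable (fun x => ⨅ l : Fin k, ‖x - cs l‖ ^ 2) P :=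
    kAux.integrable_finf hbdd cs
  have h2 : Integrable (fun x => ⨅ l : Fin k, ‖x - c' l‖ ^ 2) P :=
    kAux.integrable_finf hbdd c'
  have h3 : distortion P k cs ≤ distortion P k c' := hcs c'
  have h4 : ∫ x, (⨅ l : Fin k, ‖x - c' l‖ ^ 2) ∂P ≤
      ∫ x, ((⨅ l : Fin k, ‖x - cs l‖ ^ 2) + h x) ∂P :=
    integral_mono h2 (h1.add hint) hpt
  rw [integral_add h1 hint] at h4
  simp only [distortion] at h3
  linarith

end Aux

section Geo

variable {H : Type*} [NormedAddCommGroup H] [InnerProductSpace ℝ H]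
  [MeasurableSpace H] [BorelSpace H] [SecondCountableTopology H]

namespace kAux

def uv {k : ℕ} (cs : Fin k → H) (i j : Fin k) : H :=
  ‖cs i - cs j‖⁻¹ • (cs j - cs i)

def sf {k : ℕ} (cs : Fin k → H) (i j : Fin k) (x : H) : ℝ :=
  ⟪x - (2⁻¹ : ℝ) • (cs i + cs j), uv cs i j⟫

variable {k : ℕ} {cs : Fin k → H} {i j : Fin k}

lemma norm_uv (hr : 0 < ‖cs i - cs j‖) : ‖uv cs i j‖ = 1 := by
  rw [uv, norm_smul, norm_inv, norm_norm, norm_sub_rev (cs j)]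
  exact inv_mul_cancel₀ hr.ne'

lemma smul_uv (hr : 0 < ‖cs i - cs j‖) :
    cs j - cs i = ‖cs i - cs j‖ • uv cs i j := by
  rw [uv, smul_smul, mul_inv_cancel₀ hr.ne', one_smul]

lemma cont_sf : Continuous (sf cs i j) := by
  unfold sf
  exact (continuous_id.sub continuous_const).inner continuous_const

lemma inner_j (hr : 0 < ‖cs i - cs j‖) (x : H) :
    ⟪x - cs j, uv cs i j⟫ = sf cs i j x - ‖cs i - cs j‖ / 2 := by
  have h1 : x - cs j = (x - (2⁻¹ : ℝ) • (cs i + cs j)) - (2⁻¹ : ℝ) • (cs j - cs i) := by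
    module
  rw [h1, inner_sub_left]
  have h2 : ((2⁻¹ : ℝ) • (cs j - cs i)) = (2⁻¹ * ‖cs i - cs j‖) • uv cs i j := by
    rw [smul_uv hr, smul_smul]
  rw [h2, real_inner_smul_left, real_inner_self_eq_norm_sq, norm_uv hr, sf]
  ring

lemma inner_i (hr : 0 < ‖cs i - cs j‖) (x : H) :
    ⟪x - cs i, uv cs i j⟫ = sf cs i j x + ‖cs i - cs j‖ / 2 := by
  have h1 : x - cs i = (x - cs j) + (cs j - cs i) := by module
  rw [h1, inner_add_left, inner_j hr, smul_uv hr, real_inner_smul_left,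
    real_inner_self_eq_norm_sq, norm_uv hr]
  ring

lemma pert_i (hr : 0 < ‖cs i - cs j‖) (x : H) (v : ℝ) :
    ‖x - (cs i + v • uv cs i j)‖ ^ 2 =
      ‖x - cs i‖ ^ 2 - 2 * v * (sf cs i j x + ‖cs i - cs j‖ / 2) + v ^ 2 := by
  have h1 : x - (cs i + v • uv cs i j) = (x - cs i) - v • uv cs i j := by module
  rw [h1, norm_sub_sq_real, real_inner_smul_right, inner_i hr, norm_smul, norm_uv hr,
    mul_one, Real.norm_eq_abs, sq_abs]
  ring

lemma pert_j (hr : 0 < ‖cs i - cs j‖) (x : H) (v : ℝ) :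
    ‖x - (cs j + v • uv cs i j)‖ ^ 2 =
      ‖x - cs j‖ ^ 2 - 2 * v * (sf cs i j x - ‖cs i - cs j‖ / 2) + v ^ 2 := by
  have h1 : x - (cs j + v • uv cs i j) = (x - cs j) - v • uv cs i j := by module
  rw [h1, norm_sub_sq_real, real_inner_smul_right, inner_j hr, norm_smul, norm_uv hr,
    mul_one, Real.norm_eq_abs, sq_abs]
  ring

lemma diff_sq (hr : 0 < ‖cs i - cs j‖) (x : H) :
    ‖x - cs i‖ ^ 2 = ‖x - cs j‖ ^ 2 + 2 * ‖cs i - cs j‖ * sf cs i j x := by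
  have h1 : x - cs i = (x - cs j) + (cs j - cs i) := by module
  rw [h1, norm_add_sq_real, smul_uv hr, real_inner_smul_right, inner_j hr, norm_smul,
    norm_uv hr, mul_one, norm_norm]
  ring

lemma sf_nonneg (hr : 0 < ‖cs i - cs j‖) {x : H} (hx : x ∈ voronoi k cs j) :
    0 ≤ sf cs i j x := by
  have h := hx i
  have h2 : ‖x - cs j‖ ^ 2 ≤ ‖x - cs i‖ ^ 2 :=
    pow_le_pow_left₀ (norm_nonneg _) h 2
  rw [diff_sq hr] at h2
  nlinarith

lemma sf_nonpos (hr : 0 < ‖cs i - cs j‖) {x : H} (hx : x ∈ voronoi k cs i) :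
    sf cs i j x ≤ 0 := by
  have h := hx j
  have h2 : ‖x - cs i‖ ^ 2 ≤ ‖x - cs j‖ ^ 2 :=
    pow_le_pow_left₀ (norm_nonneg _) h 2
  rw [diff_sq hr] at h2
  nlinarith

lemma sf_zero (hr : 0 < ‖cs i - cs j‖) {x : H}
    (hx : x ∈ voronoi k cs i ∩ voronoi k cs j) : sf cs i j x = 0 :=
  le_antisymm (sf_nonpos hr hx.1) (sf_nonneg hr hx.2)

lemma finf_le [Nonempty (Fin k)] (c : Fin k → H) (x : H) (l : Fin k) :
    (⨅ m : Fin k, ‖x - c m‖ ^ 2) ≤ ‖x - c l‖ ^ 2 :=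
  ciInf_le (Finite.bddBelow_range _) l

lemma finf_eq [Nonempty (Fin k)] {x : H} {l : Fin k} (hx : x ∈ voronoi k cs l) :
    (⨅ m : Fin k, ‖x - cs m‖ ^ 2) = ‖x - cs l‖ ^ 2 :=
  le_antisymm (finf_le cs x l)
    (le_ciInf fun m => pow_le_pow_left₀ (norm_nonneg _) (hx m) 2)

lemma exists_cell [Nonempty (Fin k)] (cs : Fin k → H) (x : H) :
    ∃ l, x ∈ voronoi k cs l := by
  obtain ⟨l, -, hl⟩ := Finset.exists_min_image Finset.univ (fun m => ‖x - cs m‖)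
    ⟨Classical.arbitrary _, Finset.mem_univ _⟩
  exact ⟨l, fun m => hl m (Finset.mem_univ m)⟩

end kAux

end Geo

section Core

variable {H : Type*} [NormedAddCommGroup H] [InnerProductSpace ℝ H]
  [MeasurableSpace H] [BorelSpace H] [SecondCountableTopology H]

namespace kAux

variable {P : Measure H} [IsProbabilityMeasure P] {M : ℝ} {k : ℕ}
  {cs : Fin k → H} {i j : Fin k}

lemma toReal_le_one (W : Set H) : (P W).toReal ≤ 1 := by
  have h : P W ≤ 1 := prob_le_one
  have := ENNReal.toReal_mono (by simp) h
  simpa using this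

lemma sf_integrable (hbdd : MBounded P M) : Integrable (sf cs i j) P := by
  apply integrable_of_ball_bound hbdd cont_sf.aestronglyMeasurable
    (C := (M + ‖(2⁻¹ : ℝ) • (cs i + cs j)‖) * ‖uv cs i j‖)
  intro x hx
  have h1 : |sf cs i j x| ≤ ‖x - (2⁻¹ : ℝ) • (cs i + cs j)‖ * ‖uv cs i j‖ :=
    abs_real_inner_le_norm _ _
  have hx' : ‖x‖ ≤ M := mem_closedBall_zero_iff.mp hx
  have h2 : ‖x - (2⁻¹ : ℝ) • (cs i + cs j)‖ ≤ M + ‖(2⁻¹ : ℝ) • (cs i + cs j)‖ := by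
    calc ‖x - (2⁻¹ : ℝ) • (cs i + cs j)‖ ≤ ‖x‖ + ‖(2⁻¹ : ℝ) • (cs i + cs j)‖ :=
      norm_sub_le _ _
    _ ≤ _ := by linarith
  calc |sf cs i j x| ≤ ‖x - (2⁻¹ : ℝ) • (cs i + cs j)‖ * ‖uv cs i j‖ := h1
  _ ≤ (M + ‖(2⁻¹ : ℝ) • (cs i + cs j)‖) * ‖uv cs i j‖ :=
    mul_le_mul_of_nonneg_right h2 (norm_nonneg _)

lemma indicator_affine_integrable (hbdd : MBounded P M) {W : Set H}
    (hW : MeasurableSet W) (a b : ℝ) :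
    Integrable (W.indicator (fun y => a * sf cs i j y + b)) P :=
  (((sf_integrable hbdd).const_mul a).add (integrable_const b)).indicator hW

lemma integral_indicator_affine (hbdd : MBounded P M) {W : Set H}
    (hW : MeasurableSet W) (a b : ℝ) :
    ∫ x, W.indicator (fun y => a * sf cs i j y + b) x ∂P
      = a * ∫ x in W, sf cs i j x ∂P + (P W).toReal * b := by
  rw [integral_indicator hW, integral_add
    (((sf_integrable hbdd).const_mul a).integrableOn)
    (integrable_const b).integrableOn, integral_const_mul, setIntegral_const,
    smul_eq_mul, Measure.real]

lemma E_gen [Nonempty (Fin k)] (hbdd : MBounded P M) (hcs : cs ∈ optimal P k)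
    (m : Fin k) (v e : ℝ)
    (hm : ∀ x : H, ‖x - (cs m + v • uv cs i j)‖ ^ 2 =
      ‖x - cs m‖ ^ 2 - 2 * v * (sf cs i j x + e) + v ^ 2)
    {W : Set H} (hW : MeasurableSet W) (hWsub : W ⊆ voronoi k cs m)
    (hWoth : ∀ x, x ∉ W → ∃ l, l ≠ m ∧ x ∈ voronoi k cs l) :
    0 ≤ (-2 * v) * ∫ x in W, sf cs i j x ∂P + (P W).toReal * (-(v * (2 * e - v))) := by
  have hint := indicator_affine_integrable (cs := cs) (i := i) (j := j) hbdd hW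
    (-2 * v) (-(v * (2 * e - v)))
  have hpt : ∀ x, (⨅ l : Fin k, ‖x - Function.update cs m (cs m + v • uv cs i j) l‖ ^ 2)
      ≤ (⨅ l : Fin k, ‖x - cs l‖ ^ 2)
        + W.indicator (fun y => (-2 * v) * sf cs i j y + (-(v * (2 * e - v)))) x := by
    intro x
    by_cases hx : x ∈ W
    · rw [Set.indicator_of_mem hx, finf_eq (hWsub hx)]
      have hle := finf_le (Function.update cs m (cs m + v • uv cs i j)) x m
      rw [Function.update_self, hm x] at hle
      calc (⨅ l : Fin k, ‖x - Function.update cs m (cs m + v • uv cs i j) l‖ ^ 2)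
          ≤ ‖x - cs m‖ ^ 2 - 2 * v * (sf cs i j x + e) + v ^ 2 := hle
      _ = ‖x - cs m‖ ^ 2 + ((-2 * v) * sf cs i j x + (-(v * (2 * e - v)))) := by ring
    · rw [Set.indicator_of_notMem hx]
      obtain ⟨l, hlm, hl⟩ := hWoth x hx
      have hle := finf_le (Function.update cs m (cs m + v • uv cs i j)) x l
      rw [Function.update_of_ne hlm] at hle
      rw [finf_eq hl]
      linarith
  have h0 := opt_pert hbdd hcs (Function.update cs m (cs m + v • uv cs i j)) hint hpt
  rwa [integral_indicator_affine hbdd hW] at h0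

variable [Nonempty (Fin k)]

lemma Ei_le (hbdd : MBounded P M) (hcs : cs ∈ optimal P k)
    (hr : 0 < ‖cs i - cs j‖) :
    ∫ x in voronoi k cs i, sf cs i j x ∂P
      ≤ -(‖cs i - cs j‖ / 2) * (P (voronoi k cs i)).toReal := by
  set r := ‖cs i - cs j‖
  set Ii := ∫ x in voronoi k cs i, sf cs i j x ∂P
  set pi := (P (voronoi k cs i)).toReal with hpi
  have hpi0 : 0 ≤ pi := ENNReal.toReal_nonneg
  have hpi1 : pi ≤ 1 := toReal_le_one _
  apply le_of_forall_pos
  intro ε hε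
  have h := E_gen (i := i) (j := j) hbdd hcs i ε (r / 2)
    (fun x => pert_i hr x ε) (measurableSet_voronoi k cs i) subset_rfl
    (fun x hx => by
      obtain ⟨l, hl⟩ := exists_cell cs x
      exact ⟨l, fun he => hx (he ▸ hl), hl⟩)
  have h3 : 0 ≤ 2 * ε * (-Ii - ((r - ε) / 2) * pi) := by linear_combination h
  have h4 : 0 ≤ -Ii - ((r - ε) / 2) * pi :=
    (mul_nonneg_iff_of_pos_left (by positivity)).mp h3
  linarith [mul_le_of_le_one_right hε.le hpi1]

lemma Ei_ge (hbdd : MBounded P M) (hcs : cs ∈ optimal P k)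
    (hr : 0 < ‖cs i - cs j‖) :
    -(‖cs i - cs j‖ / 2) * (P (voronoi k cs i)).toReal
      ≤ ∫ x in voronoi k cs i, sf cs i j x ∂P := by
  set r := ‖cs i - cs j‖
  set Ii := ∫ x in voronoi k cs i, sf cs i j x ∂P
  set pi := (P (voronoi k cs i)).toReal with hpi
  have hpi0 : 0 ≤ pi := ENNReal.toReal_nonneg
  have hpi1 : pi ≤ 1 := toReal_le_one _
  apply le_of_forall_pos
  intro ε hε
  have h := E_gen (i := i) (j := j) hbdd hcs i (-ε) (r / 2)
    (fun x => pert_i hr x (-ε)) (measurableSet_voronoi k cs i) subset_rfl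
    (fun x hx => by
      obtain ⟨l, hl⟩ := exists_cell cs x
      exact ⟨l, fun he => hx (he ▸ hl), hl⟩)
  have h3 : 0 ≤ 2 * ε * (Ii + ((r + ε) / 2) * pi) := by linear_combination h
  have h4 : 0 ≤ Ii + ((r + ε) / 2) * pi :=
    (mul_nonneg_iff_of_pos_left (by positivity)).mp h3
  linarith [mul_le_of_le_one_right hε.le hpi1]

lemma Ej_ge (hbdd : MBounded P M) (hcs : cs ∈ optimal P k)
    (hr : 0 < ‖cs i - cs j‖) :
    (‖cs i - cs j‖ / 2) * (P (voronoi k cs j)).toReal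
      ≤ ∫ x in voronoi k cs j, sf cs i j x ∂P := by
  set r := ‖cs i - cs j‖
  set Ij := ∫ x in voronoi k cs j, sf cs i j x ∂P
  set pj := (P (voronoi k cs j)).toReal with hpj
  have hpj0 : 0 ≤ pj := ENNReal.toReal_nonneg
  have hpj1 : pj ≤ 1 := toReal_le_one _
  apply le_of_forall_pos
  intro ε hε
  have h := E_gen (i := i) (j := j) hbdd hcs j (-ε) (-(r / 2))
    (fun x => by rw [pert_j hr x (-ε)]; ring) (measurableSet_voronoi k cs j) subset_rfl
    (fun x hx => by
      obtain ⟨l, hl⟩ := exists_cell cs x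
      exact ⟨l, fun he => hx (he ▸ hl), hl⟩)
  have h3 : 0 ≤ 2 * ε * (Ij - ((r - ε) / 2) * pj) := by linear_combination h
  have h4 : 0 ≤ Ij - ((r - ε) / 2) * pj :=
    (mul_nonneg_iff_of_pos_left (by positivity)).mp h3
  linarith [mul_le_of_le_one_right hε.le hpj1]

lemma E2_ge (hbdd : MBounded P M) (hcs : cs ∈ optimal P k) (hij : i ≠ j)
    (hr : 0 < ‖cs i - cs j‖) :
    -(‖cs i - cs j‖ / 2) * (P (voronoi k cs i \ voronoi k cs j)).toReal
      ≤ ∫ x in voronoi k cs i \ voronoi k cs j, sf cs i j x ∂P := by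
  set r := ‖cs i - cs j‖
  set Id := ∫ x in voronoi k cs i \ voronoi k cs j, sf cs i j x ∂P
  set pd := (P (voronoi k cs i \ voronoi k cs j)).toReal with hpd
  have hpd0 : 0 ≤ pd := ENNReal.toReal_nonneg
  have hpd1 : pd ≤ 1 := toReal_le_one _
  apply le_of_forall_pos
  intro ε hε
  have h := E_gen (i := i) (j := j) hbdd hcs i (-ε) (r / 2)
    (fun x => pert_i hr x (-ε))
    ((measurableSet_voronoi k cs i).diff (measurableSet_voronoi k cs j))
    Set.diff_subset
    (fun x hx => by
      by_cases hj : x ∈ voronoi k cs j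
      · exact ⟨j, hij.symm, hj⟩
      · obtain ⟨l, hl⟩ := exists_cell cs x
        refine ⟨l, fun he => hx ?_, hl⟩
        exact ⟨he ▸ hl, hj⟩)
  have h3 : 0 ≤ 2 * ε * (Id + ((r + ε) / 2) * pd) := by linear_combination h
  have h4 : 0 ≤ Id + ((r + ε) / 2) * pd :=
    (mul_nonneg_iff_of_pos_left (by positivity)).mp h3
  linarith [mul_le_of_le_one_right hε.le hpd1]

lemma bdry_null (hbdd : MBounded P M) (hcs : cs ∈ optimal P k) (hij : i ≠ j)
    (hr : 0 < ‖cs i - cs j‖) :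
    P (voronoi k cs i ∩ voronoi k cs j) = 0 := by
  set r := ‖cs i - cs j‖
  have hVi := measurableSet_voronoi k cs i
  have hVj := measurableSet_voronoi k cs j
  have hsplit : P (voronoi k cs i \ voronoi k cs j)
      + P (voronoi k cs i ∩ voronoi k cs j) = P (voronoi k cs i) :=
    measure_diff_add_inter _ hVj
  have hIsplit : ∫ x in voronoi k cs i, sf cs i j x ∂P
      = ∫ x in voronoi k cs i \ voronoi k cs j, sf cs i j x ∂P
        + ∫ x in voronoi k cs i ∩ voronoi k cs j, sf cs i j x ∂P := by
    rw [← setIntegral_union Set.disjoint_sdiff_inter (hVi.inter hVj)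
      ((sf_integrable hbdd).integrableOn) ((sf_integrable hbdd).integrableOn),
      Set.diff_union_inter]
  have hzero : ∫ x in voronoi k cs i ∩ voronoi k cs j, sf cs i j x ∂P = 0 := by
    rw [setIntegral_congr_fun (hVi.inter hVj)
      (fun x hx => sf_zero hr hx : Set.EqOn (sf cs i j) (fun _ => (0:ℝ)) _)]
    simp
  have h1 := Ei_le hbdd hcs hr
  have h2 := E2_ge hbdd hcs hij hr
  rw [hIsplit, hzero, add_zero] at h1
  have hle : (P (voronoi k cs i)).toReal
      ≤ (P (voronoi k cs i \ voronoi k cs j)).toReal := by nlinarith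
  have hfin : P (voronoi k cs i ∩ voronoi k cs j) ≠ ⊤ := measure_ne_top _ _
  have hfin2 : P (voronoi k cs i \ voronoi k cs j) ≠ ⊤ := measure_ne_top _ _
  have htr : (P (voronoi k cs i)).toReal
      = (P (voronoi k cs i \ voronoi k cs j)).toReal
        + (P (voronoi k cs i ∩ voronoi k cs j)).toReal := by
    rw [← ENNReal.toReal_add hfin2 hfin, hsplit]
  have hm0 : (0:ℝ) ≤ (P (voronoi k cs i ∩ voronoi k cs j)).toReal :=
    ENNReal.toReal_nonneg
  have : (P (voronoi k cs i ∩ voronoi k cs j)).toReal = 0 := by linarith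
  exact (ENNReal.toReal_eq_zero_iff _).mp this |>.resolve_right hfin

end kAux

end Core

section KK

variable {H : Type*} [NormedAddCommGroup H] [InnerProductSpace ℝ H]
  [MeasurableSpace H] [BorelSpace H] [SecondCountableTopology H]

namespace kAux

variable {P : Measure H} [IsProbabilityMeasure P] {M : ℝ} {k : ℕ}
  {cs : Fin k → H} {i j : Fin k} [Nonempty (Fin k)]

lemma maxpart_integrable (hbdd : MBounded P M) (lam : ℝ) :
    Integrable (fun y => max (lam - 2 * sf cs i j y) 0) P :=
  ((integrable_const lam).sub ((sf_integrable hbdd).const_mul 2)).pos_part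

lemma K1 (hbdd : MBounded P M) (hcs : cs ∈ optimal P k) (hij : i ≠ j)
    (hr : 0 < ‖cs i - cs j‖) (lam : ℝ) (hl0 : 0 ≤ lam) (hlr : lam < ‖cs i - cs j‖) :
    (‖cs i - cs j‖ - lam) *
        ∫ x in voronoi k cs j, max (lam - 2 * sf cs i j x) 0 ∂P
      ≤ lam ^ 2 * (P (voronoi k cs i)).toReal := by
  set r := ‖cs i - cs j‖ with hrdef
  have hVi := measurableSet_voronoi k cs i
  have hVj := measurableSet_voronoi k cs j
  set g1 : H → ℝ := fun y => (-2 * lam) * sf cs i j y + (-(lam * (r - lam))) with hg1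
  set g2 : H → ℝ := fun y => (-(r - lam)) * max (lam - 2 * sf cs i j y) 0 with hg2
  set W2 : Set H := voronoi k cs j \ voronoi k cs i with hW2
  have hW2m : MeasurableSet W2 := hVj.diff hVi
  have hint1 : Integrable ((voronoi k cs i).indicator g1) P :=
    indicator_affine_integrable hbdd hVi _ _
  have hint2 : Integrable (W2.indicator g2) P :=
    (((maxpart_integrable hbdd lam).const_mul (-(r - lam))).indicator hW2m)
  have hint : Integrable
      (fun x => (voronoi k cs i).indicator g1 x + W2.indicator g2 x) P :=
    hint1.add hint2
  set c' := Function.update cs i (cs i + lam • uv cs i j) with hc'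
  have hpt : ∀ x, (⨅ l : Fin k, ‖x - c' l‖ ^ 2) ≤ (⨅ l : Fin k, ‖x - cs l‖ ^ 2)
      + ((voronoi k cs i).indicator g1 x + W2.indicator g2 x) := by
    intro x
    by_cases hxi : x ∈ voronoi k cs i
    · rw [Set.indicator_of_mem hxi, Set.indicator_of_notMem (fun h => h.2 hxi),
        finf_eq hxi]
      have hle := finf_le c' x i
      rw [hc', Function.update_self, pert_i hr x lam] at hle
      calc (⨅ l : Fin k, ‖x - c' l‖ ^ 2)
          ≤ ‖x - cs i‖ ^ 2 - 2 * lam * (sf cs i j x + r / 2) + lam ^ 2 := hle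
      _ = ‖x - cs i‖ ^ 2 + (g1 x + 0) := by rw [hg1]; ring
    · rw [Set.indicator_of_notMem hxi]
      by_cases hxj : x ∈ voronoi k cs j
      · have hxw : x ∈ W2 := ⟨hxj, hxi⟩
        rw [Set.indicator_of_mem hxw, finf_eq hxj]
        have b1 := finf_le c' x j
        rw [hc', Function.update_of_ne (Ne.symm hij)] at b1
        have b2 := finf_le c' x i
        rw [hc', Function.update_self, pert_i hr x lam, diff_sq hr x] at b2
        rcases le_total (lam - 2 * sf cs i j x) 0 with hc | hc
        · rw [hg2]
          simp only [max_eq_right hc, mul_zero]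
          linarith
        · rw [hg2]
          simp only [max_eq_left hc]
          nlinarith [b2]
      · have hxw : x ∉ W2 := fun h => hxj h.1
        rw [Set.indicator_of_notMem hxw]
        obtain ⟨l, hl⟩ := exists_cell cs x
        have hli : l ≠ i := fun he => hxi (he ▸ hl)
        have hle := finf_le c' x l
        rw [hc', Function.update_of_ne hli] at hle
        rw [finf_eq hl]
        linarith
  have h0 := opt_pert hbdd hcs c' hint hpt
  rw [integral_add hint1 hint2, integral_indicator_affine hbdd hVi,
    integral_indicator hW2m] at h0
  have hM2 : ∫ x in W2, g2 x ∂P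
      = (-(r - lam)) * ∫ x in W2, max (lam - 2 * sf cs i j x) 0 ∂P := by
    rw [hg2]; exact integral_const_mul _ _
  rw [hM2] at h0
  have hnull : P (voronoi k cs j ∩ voronoi k cs i) = 0 := by
    rw [Set.inter_comm]; exact bdry_null hbdd hcs hij hr
  have hW2ae : (W2 : Set H) =ᵐ[P] voronoi k cs j := diff_ae_eq_self.mpr hnull
  have hWint : ∫ x in W2, max (lam - 2 * sf cs i j x) 0 ∂P
      = ∫ x in voronoi k cs j, max (lam - 2 * sf cs i j x) 0 ∂P :=
    setIntegral_congr_set hW2ae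
  rw [hWint] at h0
  have hEi := Ei_ge hbdd hcs hr
  nlinarith [h0, hEi, hl0, ENNReal.toReal_nonneg (a := P (voronoi k cs i))]

lemma K2 (hbdd : MBounded P M) (hcs : cs ∈ optimal P k) (hij : i ≠ j)
    (hr : 0 < ‖cs i - cs j‖) (lam : ℝ) (hl0 : 0 ≤ lam) :
    (‖cs i - cs j‖ + lam) *
        ∫ x in voronoi k cs j, max (lam - 2 * sf cs i j x) 0 ∂P
      ≤ lam ^ 2 * (P (voronoi k cs j)).toReal := by
  set r := ‖cs i - cs j‖ with hrdef
  have hVj := measurableSet_voronoi k cs j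
  set ga : H → ℝ := fun y => (-2 * lam) * sf cs i j y + (lam * (r + lam)) with hga
  set gb : H → ℝ := fun y => (-(r + lam)) * max (lam - 2 * sf cs i j y) 0 with hgb
  have hint1 : Integrable ((voronoi k cs j).indicator ga) P :=
    indicator_affine_integrable hbdd hVj _ _
  have hint2 : Integrable ((voronoi k cs j).indicator gb) P :=
    (((maxpart_integrable hbdd lam).const_mul (-(r + lam))).indicator hVj)
  have hint : Integrable
      (fun x => (voronoi k cs j).indicator ga x + (voronoi k cs j).indicator gb x) P :=
    hint1.add hint2
  set c' := Function.update cs j (cs j + lam • uv cs i j) with hc'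
  have hpt : ∀ x, (⨅ l : Fin k, ‖x - c' l‖ ^ 2) ≤ (⨅ l : Fin k, ‖x - cs l‖ ^ 2)
      + ((voronoi k cs j).indicator ga x + (voronoi k cs j).indicator gb x) := by
    intro x
    by_cases hxj : x ∈ voronoi k cs j
    · rw [Set.indicator_of_mem hxj, Set.indicator_of_mem hxj, finf_eq hxj]
      have b1 := finf_le c' x j
      rw [hc', Function.update_self, pert_j hr x lam] at b1
      have b2 := finf_le c' x i
      rw [hc', Function.update_of_ne hij] at b2
      rw [diff_sq hr x] at b2
      rcases le_total (lam - 2 * sf cs i j x) 0 with hc | hc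
      · rw [hga, hgb]
        simp only [max_eq_right hc, mul_zero]
        nlinarith [b1]
      · rw [hga, hgb]
        simp only [max_eq_left hc]
        nlinarith [b2]
    · rw [Set.indicator_of_notMem hxj, Set.indicator_of_notMem hxj]
      obtain ⟨l, hl⟩ := exists_cell cs x
      have hlj : l ≠ j := fun he => hxj (he ▸ hl)
      have hle := finf_le c' x l
      rw [hc', Function.update_of_ne hlj] at hle
      rw [finf_eq hl]
      linarith
  have h0 := opt_pert hbdd hcs c' hint hpt
  rw [integral_add hint1 hint2, integral_indicator_affine hbdd hVj,
    integral_indicator hVj] at h0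
  have hM2 : ∫ x in voronoi k cs j, gb x ∂P
      = (-(r + lam)) * ∫ x in voronoi k cs j, max (lam - 2 * sf cs i j x) 0 ∂P := by
    rw [hgb]; exact integral_const_mul _ _
  rw [hM2] at h0
  have hEj := Ej_ge hbdd hcs hr
  nlinarith [h0, hEj, hl0, ENNReal.toReal_nonneg (a := P (voronoi k cs j))]

end kAux

end KK

section Layer

variable {H : Type*} [NormedAddCommGroup H] [InnerProductSpace ℝ H]
  [MeasurableSpace H] [BorelSpace H] [SecondCountableTopology H]

namespace kAux

variable {P : Measure H} [IsProbabilityMeasure P] {k : ℕ}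
  {cs : Fin k → H} {i j : Fin k}

lemma vol_slice {s T : ℝ} (hs : 0 ≤ s) (hT : 0 ≤ T) :
    (volume (Set.Ici s ∩ Set.Ioc 0 T) : ℝ≥0∞) = ENNReal.ofReal (max (T - s) 0) := by
  rcases eq_or_lt_of_le hs with hs0 | hs0
  · have h1 : Set.Ici s ∩ Set.Ioc 0 T = Set.Ioc 0 T := by
      apply Set.inter_eq_self_of_subset_right
      intro u hu
      simp only [Set.mem_Ici]
      rw [← hs0]
      exact hu.1.le
    rw [h1, Real.volume_Ioc, ← hs0]
    rw [max_eq_left (by linarith)]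
  · have h1 : Set.Ici s ∩ Set.Ioc 0 T = Set.Icc s T := by
      ext u
      simp only [Set.mem_inter_iff, Set.mem_Ici, Set.mem_Ioc, Set.mem_Icc]
      constructor
      · rintro ⟨h1, _, h3⟩; exact ⟨h1, h3⟩
      · rintro ⟨h1, h2⟩; exact ⟨h1, lt_of_lt_of_le hs0 h1, h2⟩
    rw [h1, Real.volume_Icc]
    rcases le_total 0 (T - s) with hc | hc
    · rw [max_eq_left hc]
    · rw [max_eq_right hc, ENNReal.ofReal_of_nonpos hc, ENNReal.ofReal_zero]

lemma layercake (hr : 0 < ‖cs i - cs j‖) {T : ℝ} (hT : 0 ≤ T) :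
    ∫ s in (0:ℝ)..T, pij P k cs i j s
      = ∫ x in voronoi k cs j, max (T - sf cs i j x) 0 ∂P := by
  have hVj := measurableSet_voronoi k cs j
  set A : ℝ → Set H := fun v => voronoi k cs j ∩ {x | sf cs i j x ≤ v} with hA
  have hAm : ∀ v, MeasurableSet (A v) := fun v =>
    hVj.inter (cont_sf.measurable measurableSet_Iic)
  have hpij : ∀ v : ℝ, pij P k cs i j v = (P (A v)).toReal := by
    intro v
    have h1 : pij P k cs i j v = (P ({x : H |
        0 ≤ ⟪x - (2⁻¹ : ℝ) • (cs i + cs j), ‖cs i - cs j‖⁻¹ • (cs j - cs i)⟫ ∧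
        ⟪x - (2⁻¹ : ℝ) • (cs i + cs j), ‖cs i - cs j‖⁻¹ • (cs j - cs i)⟫ ≤ v} ∩
      voronoi k cs j)).toReal := rfl
    rw [h1]
    congr 1
    apply congrArg
    ext x
    simp only [Set.mem_inter_iff, Set.mem_setOf_eq, hA]
    constructor
    · rintro ⟨⟨-, h2⟩, h3⟩; exact ⟨h3, h2⟩
    · rintro ⟨h3, h2⟩
      exact ⟨⟨sf_nonneg hr h3, h2⟩, h3⟩
  -- the swapped-product set
  set E' : Set (ℝ × H) := {p | p.2 ∈ voronoi k cs j ∧ sf cs i j p.2 ≤ p.1} with hE'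
  have hE'm : MeasurableSet E' := by
    apply MeasurableSet.inter
    · exact measurable_snd hVj
    · exact measurableSet_le (cont_sf.measurable.comp measurable_snd) measurable_fst
  have hAE' : ∀ v : ℝ, A v = Prod.mk v ⁻¹' E' := by
    intro v; ext x; simp [hA, hE']
  have hmeas : Measurable fun v : ℝ => P (A v) := by
    have := measurable_measure_prodMk_left (ν := P) hE'm
    simpa [← hAE'] using this
  -- step 1: interval integral to set integral
  rw [intervalIntegral.integral_of_le hT]
  rw [setIntegral_congr_fun measurableSet_Ioc (fun v _ => hpij v)]
  -- step 2: toReal out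
  rw [integral_toReal (hmeas.aemeasurable.restrict)
    (Filter.Eventually.of_forall fun v => measure_lt_top _ _)]
  -- step 3: Tonelli
  have hswap : ∫⁻ v in Set.Ioc (0:ℝ) T, P (A v) ∂volume
      = ∫⁻ x, Set.indicator (voronoi k cs j)
          (fun x => ENNReal.ofReal (max (T - sf cs i j x) 0)) x ∂P := by
    have h1 : ∀ v : ℝ, P (A v)
        = ∫⁻ x, Set.indicator (A v) (fun _ => (1:ℝ≥0∞)) x ∂P := by
      intro v
      rw [lintegral_indicator (hAm v)]
      simp
    calc ∫⁻ v in Set.Ioc (0:ℝ) T, P (A v) ∂volume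
        = ∫⁻ v in Set.Ioc (0:ℝ) T,
            ∫⁻ x, Set.indicator (A v) (fun _ => (1:ℝ≥0∞)) x ∂P ∂volume := by
          exact lintegral_congr fun v => h1 v
    _ = ∫⁻ x, ∫⁻ v in Set.Ioc (0:ℝ) T,
            Set.indicator (A v) (fun _ => (1:ℝ≥0∞)) x ∂volume ∂P := by
          apply lintegral_lintegral_swap
          apply Measurable.aemeasurable
          have : (Function.uncurry fun v x =>
              Set.indicator (A v) (fun _ => (1:ℝ≥0∞)) x)
              = Set.indicator E' (fun _ => (1:ℝ≥0∞)) := by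
            funext p
            rcases p with ⟨v, x⟩
            simp only [Function.uncurry, Set.indicator_apply, hA, hE',
              Set.mem_inter_iff, Set.mem_setOf_eq]
          rw [this]
          exact measurable_const.indicator hE'm
    _ = ∫⁻ x, Set.indicator (voronoi k cs j)
            (fun x => ENNReal.ofReal (max (T - sf cs i j x) 0)) x ∂P := by
          apply lintegral_congr
          intro x
          by_cases hx : x ∈ voronoi k cs j
          · have h2 : (fun v => Set.indicator (A v) (fun _ => (1:ℝ≥0∞)) x)
                = Set.indicator (Set.Ici (sf cs i j x)) (fun _ => (1:ℝ≥0∞)) := by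
              funext v
              simp only [Set.indicator_apply, hA, Set.mem_inter_iff,
                Set.mem_setOf_eq, Set.mem_Ici, hx, true_and]
            rw [h2, lintegral_indicator measurableSet_Ici]
            simp only [Set.indicator_of_mem hx]
            rw [setLIntegral_one, Measure.restrict_apply measurableSet_Ici]
            exact vol_slice (sf_nonneg hr hx) hT
          · simp only [Set.indicator_of_notMem hx]
            have h2 : ∀ v : ℝ, Set.indicator (A v) (fun _ => (1:ℝ≥0∞)) x = 0 := by
              intro v
              apply Set.indicator_of_notMem
              exact fun hmem => hx hmem.1
            simp only [h2, lintegral_const, zero_mul]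
  rw [hswap, lintegral_indicator hVj]
  -- step 4: back to Bochner integral
  have h4 : ∫ x in voronoi k cs j, max (T - sf cs i j x) 0 ∂P
      = (∫⁻ x in voronoi k cs j,
          ENNReal.ofReal (max (T - sf cs i j x) 0) ∂P).toReal :=
    integral_eq_lintegral_of_nonneg_ae
      (Filter.Eventually.of_forall fun x => le_max_right _ _)
      (((continuous_const.sub cont_sf).max continuous_const).aestronglyMeasurable.restrict)
  rw [h4]

end kAux

end Layer

section K3s

variable {H : Type*} [NormedAddCommGroup H] [InnerProductSpace ℝ H]
  [MeasurableSpace H] [BorelSpace H] [SecondCountableTopology H]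

namespace kAux

variable {P : Measure H} [IsProbabilityMeasure P] {M : ℝ} {k : ℕ}
  {cs : Fin k → H} {i j : Fin k} [Nonempty (Fin k)]

lemma Ej_le (hbdd : MBounded P M) (hcs : cs ∈ optimal P k)
    (hr : 0 < ‖cs i - cs j‖) :
    ∫ x in voronoi k cs j, sf cs i j x ∂P
      ≤ (‖cs i - cs j‖ / 2) * (P (voronoi k cs j)).toReal := by
  set r := ‖cs i - cs j‖
  set Ij := ∫ x in voronoi k cs j, sf cs i j x ∂P
  set pj := (P (voronoi k cs j)).toReal with hpj
  have hpj0 : 0 ≤ pj := ENNReal.toReal_nonneg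
  have hpj1 : pj ≤ 1 := toReal_le_one _
  apply le_of_forall_pos
  intro ε hε
  have h := E_gen (i := i) (j := j) hbdd hcs j ε (-(r / 2))
    (fun x => by rw [pert_j hr x ε]; ring) (measurableSet_voronoi k cs j) subset_rfl
    (fun x hx => by
      obtain ⟨l, hl⟩ := exists_cell cs x
      exact ⟨l, fun he => hx (he ▸ hl), hl⟩)
  have h3 : 0 ≤ 2 * ε * (-Ij + ((r + ε) / 2) * pj) := by linear_combination h
  have h4 : 0 ≤ -Ij + ((r + ε) / 2) * pj :=
    (mul_nonneg_iff_of_pos_left (by positivity)).mp h3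
  linarith [mul_le_of_le_one_right hε.le hpj1]

lemma maxpart_integrable' (hbdd : MBounded P M) (lam : ℝ) :
    Integrable (fun y => max (lam - sf cs i j y) 0) P :=
  ((integrable_const lam).sub (sf_integrable hbdd)).pos_part

lemma K3 (hbdd : MBounded P M) (hcs : cs ∈ optimal P k) (hij : i ≠ j)
    (hr : 0 < ‖cs i - cs j‖) (lam : ℝ) (hl0 : 0 ≤ lam) :
    2 * ‖cs i - cs j‖ *
        ∫ x in voronoi k cs j, max (lam - sf cs i j x) 0 ∂P
      ≤ lam ^ 2 *
        ((P (voronoi k cs i)).toReal + (P (voronoi k cs j)).toReal) := by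
  set r := ‖cs i - cs j‖ with hrdef
  have hVi := measurableSet_voronoi k cs i
  have hVj := measurableSet_voronoi k cs j
  set g1 : H → ℝ := fun y => (-2 * lam) * sf cs i j y + (-(lam * (r - lam))) with hg1
  set ga : H → ℝ := fun y => (-2 * lam) * sf cs i j y + (lam * (r + lam)) with hga
  set gb : H → ℝ := fun y => (-(2 * r)) * max (lam - sf cs i j y) 0 with hgb
  set W2 : Set H := voronoi k cs j \ voronoi k cs i with hW2
  have hW2m : MeasurableSet W2 := hVj.diff hVi
  have hint1 : Integrable ((voronoi k cs i).indicator g1) P :=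
    indicator_affine_integrable hbdd hVi _ _
  have hint2 : Integrable (W2.indicator ga) P :=
    indicator_affine_integrable hbdd hW2m _ _
  have hint3 : Integrable (W2.indicator gb) P :=
    ((maxpart_integrable' hbdd lam).const_mul (-(2 * r))).indicator hW2m
  have hint : Integrable (fun x => (voronoi k cs i).indicator g1 x
      + (W2.indicator ga x + W2.indicator gb x)) P :=
    hint1.add (hint2.add hint3)
  set c' := Function.update (Function.update cs i (cs i + lam • uv cs i j)) j
    (cs j + lam • uv cs i j) with hc'
  have hc'i : c' i = cs i + lam • uv cs i j := by
    rw [hc', Function.update_of_ne hij, Function.update_self]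
  have hc'j : c' j = cs j + lam • uv cs i j := by
    rw [hc', Function.update_self]
  have hc'l : ∀ l, l ≠ i → l ≠ j → c' l = cs l := by
    intro l hli hlj
    rw [hc', Function.update_of_ne hlj, Function.update_of_ne hli]
  have hpt : ∀ x, (⨅ l : Fin k, ‖x - c' l‖ ^ 2) ≤ (⨅ l : Fin k, ‖x - cs l‖ ^ 2)
      + ((voronoi k cs i).indicator g1 x
        + (W2.indicator ga x + W2.indicator gb x)) := by
    intro x
    by_cases hxi : x ∈ voronoi k cs i
    · rw [Set.indicator_of_mem hxi, Set.indicator_of_notMem (fun h => h.2 hxi),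
        Set.indicator_of_notMem (fun h => h.2 hxi), finf_eq hxi]
      have hle := finf_le c' x i
      rw [hc'i, pert_i hr x lam] at hle
      calc (⨅ l : Fin k, ‖x - c' l‖ ^ 2)
          ≤ ‖x - cs i‖ ^ 2 - 2 * lam * (sf cs i j x + r / 2) + lam ^ 2 := hle
      _ = ‖x - cs i‖ ^ 2 + (g1 x + (0 + 0)) := by rw [hg1]; ring
    · rw [Set.indicator_of_notMem hxi]
      by_cases hxj : x ∈ voronoi k cs j
      · have hxw : x ∈ W2 := ⟨hxj, hxi⟩
        rw [Set.indicator_of_mem hxw, Set.indicator_of_mem hxw, finf_eq hxj]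
        have b1 := finf_le c' x j
        rw [hc'j, pert_j hr x lam] at b1
        have b2 := finf_le c' x i
        rw [hc'i, pert_i hr x lam, diff_sq hr x] at b2
        rcases le_total (lam - sf cs i j x) 0 with hc | hc
        · rw [hga, hgb]
          simp only [max_eq_right hc, mul_zero]
          nlinarith [b1]
        · rw [hga, hgb]
          simp only [max_eq_left hc]
          nlinarith [b2]
      · have hxw : x ∉ W2 := fun h => hxj h.1
        rw [Set.indicator_of_notMem hxw, Set.indicator_of_notMem hxw]
        obtain ⟨l, hl⟩ := exists_cell cs x
        have hli : l ≠ i := fun he => hxi (he ▸ hl)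
        have hlj : l ≠ j := fun he => hxj (he ▸ hl)
        have hle := finf_le c' x l
        rw [hc'l l hli hlj] at hle
        rw [finf_eq hl]
        linarith
  have hint23 : Integrable (fun x => W2.indicator ga x + W2.indicator gb x) P :=
    hint2.add hint3
  have h0 := opt_pert hbdd hcs c' hint hpt
  rw [integral_add hint1 hint23, integral_add hint2 hint3,
    integral_indicator_affine hbdd hVi, integral_indicator_affine hbdd hW2m,
    integral_indicator hW2m] at h0
  have hM2 : ∫ x in W2, gb x ∂P
      = (-(2 * r)) * ∫ x in W2, max (lam - sf cs i j x) 0 ∂P := by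
    rw [hgb]; exact integral_const_mul _ _
  rw [hM2] at h0
  -- replace W2 by voronoi j using the null boundary
  have hnull : P (voronoi k cs j ∩ voronoi k cs i) = 0 := by
    rw [Set.inter_comm]; exact bdry_null hbdd hcs hij hr
  have hW2ae : (W2 : Set H) =ᵐ[P] voronoi k cs j := diff_ae_eq_self.mpr hnull
  have hsfW2 : ∫ x in W2, sf cs i j x ∂P = ∫ x in voronoi k cs j, sf cs i j x ∂P :=
    setIntegral_congr_set hW2ae
  have hmaxW2 : ∫ x in W2, max (lam - sf cs i j x) 0 ∂P
      = ∫ x in voronoi k cs j, max (lam - sf cs i j x) 0 ∂P :=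
    setIntegral_congr_set hW2ae
  have hPW2 : (P W2).toReal = (P (voronoi k cs j)).toReal := by
    rw [measure_congr hW2ae]
  rw [hsfW2, hmaxW2, hPW2] at h0
  have hEi_le := Ei_le hbdd hcs hr
  have hEi_ge := Ei_ge hbdd hcs hr
  have hEj_le := Ej_le hbdd hcs hr
  have hEj_ge := Ej_ge hbdd hcs hr
  have hIi : ∫ x in voronoi k cs i, sf cs i j x ∂P
      = -(r / 2) * (P (voronoi k cs i)).toReal := le_antisymm hEi_le hEi_ge
  have hIj : ∫ x in voronoi k cs j, sf cs i j x ∂P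
      = (r / 2) * (P (voronoi k cs j)).toReal := le_antisymm hEj_le hEj_ge
  rw [hIi, hIj] at h0
  nlinarith [h0]

end kAux

end K3s


/-- necessary condition on the mass of slabs near Voronoi
boundaries of an optimal codebook. -/
theorem slab_mass_integral_bounds_of_optimal
    (P : Measure H) [IsProbabilityMeasure P] (k : ℕ) (M : ℝ)
    (hk : 1 ≤ k) (hM : 0 < M) (hbdd : MBounded P M) (hsupp : SupportMoreThan P k)
    (cs : Fin k → H) (hcs : cs ∈ optimal P k)
    (i j : Fin k) (hij : i ≠ j) (t : ℝ) (ht0 : 0 ≤ t) (ht : t < 1 / 2) :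
    (∫ s in (0 : ℝ)..(t * ‖cs i - cs j‖), pij P k cs i j s) ≤
        2 * t ^ 2 * ‖cs i - cs j‖ *
          min ((P (voronoi k cs i)).toReal / (1 - 2 * t))
              ((P (voronoi k cs j)).toReal / (1 + 2 * t)) ∧
    (∫ s in (0 : ℝ)..(t * ‖cs i - cs j‖), pij P k cs i j s) ≤
        t ^ 2 * ‖cs i - cs j‖ *
          ((P (voronoi k cs i)).toReal + (P (voronoi k cs j)).toReal) / 2 := by

  rcases eq_or_lt_of_le (norm_nonneg (cs i - cs j)) with hr | hr
  · rw [← hr]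
    norm_num [intervalIntegral.integral_same]
  · haveI : Nonempty (Fin k) := ⟨i⟩
    set r := ‖cs i - cs j‖ with hrdef
    set T := t * r with hTdef
    have hT0 : 0 ≤ T := mul_nonneg ht0 (norm_nonneg _)
    set pi := (P (voronoi k cs i)).toReal with hpidef
    set pj := (P (voronoi k cs j)).toReal with hpjdef
    have hpi0 : 0 ≤ pi := ENNReal.toReal_nonneg
    have hpj0 : 0 ≤ pj := ENNReal.toReal_nonneg
    have h1t : 0 < 1 - 2 * t := by linarith
    have h2t : 0 < 1 + 2 * t := by linarith
    have hr2T : 0 < r - 2 * T := by nlinarith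
    have hlc := kAux.layercake (P := P) (cs := cs) (i := i) (j := j) hr hT0
    set J := ∫ x in voronoi k cs j, max (T - kAux.sf cs i j x) 0 ∂P with hJdef
    have hJ0 : 0 ≤ J := integral_nonneg fun x => le_max_right _ _
    -- doubling identity
    have hdouble : ∫ x in voronoi k cs j, max (2 * T - 2 * kAux.sf cs i j x) 0 ∂P
        = 2 * J := by
      rw [hJdef, ← integral_const_mul]
      apply integral_congr_ae
      filter_upwards with x
      rcases le_total (T - kAux.sf cs i j x) 0 with hc | hc
      · rw [max_eq_right hc, max_eq_right (by linarith), mul_zero]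
      · rw [max_eq_left hc, max_eq_left (by linarith)]
        ring
    have hK1 := kAux.K1 hbdd hcs hij hr (2 * T) (by linarith) (by linarith)
    have hK2 := kAux.K2 hbdd hcs hij hr (2 * T) (by linarith)
    have hK3 := kAux.K3 hbdd hcs hij hr T hT0
    rw [hdouble] at hK1 hK2
    -- bound via p_i
    have hb1 : J ≤ 2 * t ^ 2 * r * (pi / (1 - 2 * t)) := by
      have h1 : J ≤ ((2 * T) ^ 2 * pi) / (2 * (r - 2 * T)) := by
        rw [le_div_iff₀ (by positivity)]
        nlinarith [hK1]
      have h2 : ((2 * T) ^ 2 * pi) / (2 * (r - 2 * T))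
          = 2 * t ^ 2 * r * (pi / (1 - 2 * t)) := by
        rw [hTdef]
        field_simp
      linarith [h1, h2.symm.le, h2.le]
    -- bound via p_j
    have hb2 : J ≤ 2 * t ^ 2 * r * (pj / (1 + 2 * t)) := by
      have hrT2 : 0 < r + 2 * T := by nlinarith
      have h1 : J ≤ ((2 * T) ^ 2 * pj) / (2 * (r + 2 * T)) := by
        rw [le_div_iff₀ (by positivity)]
        nlinarith [hK2]
      have h2 : ((2 * T) ^ 2 * pj) / (2 * (r + 2 * T))
          = 2 * t ^ 2 * r * (pj / (1 + 2 * t)) := by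
        rw [hTdef]
        field_simp
      linarith [h1, h2.le]
    -- bound via average
    have hb3 : J ≤ t ^ 2 * r * (pi + pj) / 2 := by
      have h1 : J ≤ (T ^ 2 * (pi + pj)) / (2 * r) := by
        rw [le_div_iff₀ (by positivity)]
        nlinarith [hK3]
      have h2 : (T ^ 2 * (pi + pj)) / (2 * r) = t ^ 2 * r * (pi + pj) / 2 := by
        rw [hTdef]
        field_simp
      linarith [h1, h2.le]
    constructor
    · rw [hlc]
      rcases le_total (pi / (1 - 2 * t)) (pj / (1 + 2 * t)) with hm | hm
      · rw [min_eq_left hm]; exact hb1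
      · rw [min_eq_right hm]; exact hb2
    · rw [hlc]
      exact hb3
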